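/- Let b ∈ ℝ⁷ with rank M(b) = 3. Then the linear span of the seven polynomials q₁,…,q₇ in ℝ[z₁,z₂,z₃] equals the space of all polynomials q ∈ ℝ[z₁,z₂,z₃] of total degree at most 2 that vanish identically on the baseline, i.e. satisfy q(s·v(b)) = 0 for all s ∈ ℝ. -/

import Mathlib

/-- The 3×4 camera matrix `M(b)` with rows `(1, b₁, b₂, b₃)`, `(b₄, b₅, b₆, b₇)`,
`(0, 0, 0, 1)`. -/
def Mcam (b : Fin 7 → ℝ) : Matrix (Fin 3) (Fin 4) ℝ :=
  !![1, b 0, b 1, b 2; b 3, b 4, b 5, b 6; 0, 0, 0, 1]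

/-- `v(b) = (b₂b₅ − b₁b₆, b₆ − b₂b₄, b₁b₄ − b₅)`, the direction of the baseline. -/
def vbase (b : Fin 7 → ℝ) : Fin 3 → ℝ :=
  ![b 1 * b 4 - b 0 * b 5, b 5 - b 1 * b 3, b 0 * b 3 - b 4]

open MvPolynomial in
/-- `q₁ = b₄z₁z₂ + b₅z₂² + b₆z₂z₃`. -/
noncomputable def q₁ (b : Fin 7 → ℝ) : MvPolynomial (Fin 3) ℝ :=
  C (b 3) * X 0 * X 1 + C (b 4) * X 1 ^ 2 + C (b 5) * X 1 * X 2

open MvPolynomial in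
/-- `q₂ = b₄z₁z₃ + b₅z₂z₃ + b₆z₃²`. -/
noncomputable def q₂ (b : Fin 7 → ℝ) : MvPolynomial (Fin 3) ℝ :=
  C (b 3) * X 0 * X 2 + C (b 4) * X 1 * X 2 + C (b 5) * X 2 ^ 2

open MvPolynomial in
/-- `q₃ = b₄z₁ + b₅z₂ + b₆z₃`. -/
noncomputable def q₃ (b : Fin 7 → ℝ) : MvPolynomial (Fin 3) ℝ :=
  C (b 3) * X 0 + C (b 4) * X 1 + C (b 5) * X 2

open MvPolynomial in
/-- `q₄ = z₁² + b₁z₁z₂ + b₂z₁z₃`. -/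
noncomputable def q₄ (b : Fin 7 → ℝ) : MvPolynomial (Fin 3) ℝ :=
  X 0 ^ 2 + C (b 0) * X 0 * X 1 + C (b 1) * X 0 * X 2

open MvPolynomial in
/-- `q₅ = z₁z₂ + b₁z₂² + b₂z₂z₃`. -/
noncomputable def q₅ (b : Fin 7 → ℝ) : MvPolynomial (Fin 3) ℝ :=
  X 0 * X 1 + C (b 0) * X 1 ^ 2 + C (b 1) * X 1 * X 2

open MvPolynomial in
/-- `q₆ = z₁z₃ + b₁z₂z₃ + b₂z₃²`. -/
noncomputable def q₆ (b : Fin 7 → ℝ) : MvPolynomial (Fin 3) ℝ :=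
  X 0 * X 2 + C (b 0) * X 1 * X 2 + C (b 1) * X 2 ^ 2

open MvPolynomial in
/-- `q₇ = z₁ + b₁z₂ + b₂z₃`. -/
noncomputable def q₇ (b : Fin 7 → ℝ) : MvPolynomial (Fin 3) ℝ :=
  X 0 + C (b 0) * X 1 + C (b 1) * X 2

/-! ### Auxiliary material -/

open MvPolynomial

/-- Explicit exponent vectors for monomials in three variables. -/
noncomputable def fs3 (a b c : ℕ) : Fin 3 →₀ ℕ :=
  Finsupp.single 0 a + Finsupp.single 1 b + Finsupp.single 2 c

lemma fs3_apply0 (a b c : ℕ) : fs3 a b c 0 = a := by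
  simp [fs3, Finsupp.single_apply]
lemma fs3_apply1 (a b c : ℕ) : fs3 a b c 1 = b := by
  simp [fs3, Finsupp.single_apply]
lemma fs3_apply2 (a b c : ℕ) : fs3 a b c 2 = c := by
  simp [fs3, Finsupp.single_apply]

lemma eq_fs3 (m : Fin 3 →₀ ℕ) : m = fs3 (m 0) (m 1) (m 2) := by
  ext i
  fin_cases i <;> simp [fs3_apply0, fs3_apply1, fs3_apply2]

lemma fs3_inj {a b c a' b' c' : ℕ} : fs3 a b c = fs3 a' b' c' ↔ a = a' ∧ b = b' ∧ c = c' := by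
  constructor
  · intro h
    refine ⟨?_, ?_, ?_⟩
    · have := DFunLike.congr_fun h 0; simpa [fs3_apply0] using this
    · have := DFunLike.congr_fun h 1; simpa [fs3_apply1] using this
    · have := DFunLike.congr_fun h 2; simpa [fs3_apply2] using this
  · rintro ⟨rfl, rfl, rfl⟩; rfl

lemma sum_support3 (m : Fin 3 →₀ ℕ) : (∑ i ∈ m.support, m i) = m 0 + m 1 + m 2 := by
  rw [Finset.sum_subset (Finset.subset_univ _)]
  · simp [Fin.sum_univ_three]
  · intro x _ hx
    simpa using Finsupp.notMem_support_iff.mp hx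

lemma mono_fs3 (a b c : ℕ) (r : ℝ) :
    (monomial (fs3 a b c) r : MvPolynomial (Fin 3) ℝ) = C r * X 0 ^ a * X 1 ^ b * X 2 ^ c := by
  rw [C_apply, X_pow_eq_monomial, X_pow_eq_monomial, X_pow_eq_monomial,
    monomial_mul, monomial_mul, monomial_mul, fs3]
  simp

/-- Every polynomial of total degree at most 2 in three variables is an explicit
linear combination of the ten monomials of degree at most 2. -/
lemma extract3 (q : MvPolynomial (Fin 3) ℝ) (h : q.totalDegree ≤ 2) :
    q = C (coeff (fs3 0 0 0) q) + C (coeff (fs3 1 0 0) q) * X 0 ^ 1 * X 1 ^ 0 * X 2 ^ 0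
      + C (coeff (fs3 0 1 0) q) * X 0 ^ 0 * X 1 ^ 1 * X 2 ^ 0
      + C (coeff (fs3 0 0 1) q) * X 0 ^ 0 * X 1 ^ 0 * X 2 ^ 1
      + C (coeff (fs3 2 0 0) q) * X 0 ^ 2 * X 1 ^ 0 * X 2 ^ 0
      + C (coeff (fs3 1 1 0) q) * X 0 ^ 1 * X 1 ^ 1 * X 2 ^ 0
      + C (coeff (fs3 1 0 1) q) * X 0 ^ 1 * X 1 ^ 0 * X 2 ^ 1
      + C (coeff (fs3 0 2 0) q) * X 0 ^ 0 * X 1 ^ 2 * X 2 ^ 0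
      + C (coeff (fs3 0 1 1) q) * X 0 ^ 0 * X 1 ^ 1 * X 2 ^ 1
      + C (coeff (fs3 0 0 2) q) * X 0 ^ 0 * X 1 ^ 0 * X 2 ^ 2 := by
  have hC : (C (coeff (fs3 0 0 0) q) : MvPolynomial (Fin 3) ℝ)
      = monomial (fs3 0 0 0) (coeff (fs3 0 0 0) q) := by
    rw [mono_fs3]; ring
  rw [hC, ← mono_fs3, ← mono_fs3, ← mono_fs3, ← mono_fs3, ← mono_fs3, ← mono_fs3,
    ← mono_fs3, ← mono_fs3, ← mono_fs3]
  ext m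
  by_cases hm : m 0 + m 1 + m 2 ≤ 2
  · have hex : ∃ x y z : ℕ, x + y + z ≤ 2 ∧ m = fs3 x y z := ⟨m 0, m 1, m 2, hm, eq_fs3 m⟩
    obtain ⟨x, y, z, hs, rfl⟩ := hex
    have hx : x ≤ 2 := by omega
    have hy : y ≤ 2 := by omega
    have hz : z ≤ 2 := by omega
    interval_cases x <;> interval_cases y <;> interval_cases z <;>
      first
        | omega
        | simp [coeff_add, coeff_monomial, fs3_inj]
  · have h0 : coeff m q = 0 := by
      apply coeff_eq_zero_of_totalDegree_lt
      rw [sum_support3]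
      omega
    have hne : ∀ a b c : ℕ, a + b + c ≤ 2 → fs3 a b c ≠ m := by
      intro a b c habc heq
      apply hm
      have h0' := fs3_apply0 a b c
      have h1' := fs3_apply1 a b c
      have h2' := fs3_apply2 a b c
      rw [heq] at h0' h1' h2'
      omega
    rw [h0]
    simp only [coeff_add, coeff_monomial]
    rw [if_neg (hne 0 0 0 (by norm_num)), if_neg (hne 1 0 0 (by norm_num)),
      if_neg (hne 0 1 0 (by norm_num)), if_neg (hne 0 0 1 (by norm_num)),
      if_neg (hne 2 0 0 (by norm_num)), if_neg (hne 1 1 0 (by norm_num)),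
      if_neg (hne 1 0 1 (by norm_num)), if_neg (hne 0 2 0 (by norm_num)),
      if_neg (hne 0 1 1 (by norm_num)), if_neg (hne 0 0 2 (by norm_num))]
    norm_num

/-- Decomposition of a vector orthogonal to `v = u × w` in terms of
`u = (b₃, b₄, b₅)` and `w = (1, b₀, b₁)`. -/
lemma vec_decomp (b0 b1 b3 b4 b5 v0 v1 v2 P0 P1 P2 : ℝ)
    (hv0 : v0 = b1*b4 - b0*b5) (hv1 : v1 = b5 - b1*b3) (hv2 : v2 = b0*b3 - b4)
    (hN0 : v0^2 + v1^2 + v2^2 ≠ 0)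
    (hP : P0*v0 + P1*v1 + P2*v2 = 0) :
    ∃ α β : ℝ, P0 = α*b3 + β ∧ P1 = α*b4 + β*b0 ∧ P2 = α*b5 + β*b1 := by
  refine ⟨((P1*b1 - P2*b0)*v0 + (P2*1 - P0*b1)*v1 + (P0*b0 - P1*1)*v2)/(v0^2 + v1^2 + v2^2),
          ((b4*P2 - b5*P1)*v0 + (b5*P0 - b3*P2)*v1 + (b3*P1 - b4*P0)*v2)/(v0^2 + v1^2 + v2^2),
          ?_, ?_, ?_⟩
  · field_simp
    subst hv0 hv1 hv2
    linear_combination (b1*b4 - b0*b5) * hP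
  · field_simp
    subst hv0 hv1 hv2
    linear_combination (b5 - b1*b3) * hP
  · field_simp
    subst hv0 hv1 hv2
    linear_combination (b0*b3 - b4) * hP

/-- The key arithmetic fact: coefficients of a degree-two polynomial vanishing on
the line spanned by `v` can be written in the shape produced by
`q₁, …, q₇`-combinations. -/
lemma real_decomp (b0 b1 b3 b4 b5 v0 v1 v2 e d0 d1 d2 c0 c1 c2 c3 c4 c5 : ℝ)
    (hv0 : v0 = b1*b4 - b0*b5) (hv1 : v1 = b5 - b1*b3) (hv2 : v2 = b0*b3 - b4)
    (hN0 : v0^2 + v1^2 + v2^2 ≠ 0)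
    (H0 : e = 0)
    (H1 : d0*v0 + d1*v1 + d2*v2 = 0)
    (H2 : c0*v0^2 + c1*v0*v1 + c2*v0*v2 + c3*v1^2 + c4*v1*v2 + c5*v2^2 = 0) :
    ∃ l1 l2 l3 l4 l5 l6 l7 : ℝ,
      e = 0 ∧
      d0 = l3*b3 + l7 ∧ d1 = l3*b4 + l7*b0 ∧ d2 = l3*b5 + l7*b1 ∧
      c0 = l4 ∧
      c1 = l4*b0 + l1*b3 + l5 ∧
      c2 = l4*b1 + l2*b3 + l6 ∧
      c3 = l1*b4 + l5*b0 ∧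
      c4 = l1*b5 + l5*b1 + l2*b4 + l6*b0 ∧
      c5 = l2*b5 + l6*b1 := by
  have hw : v0 + b0*v1 + b1*v2 = 0 := by subst hv0 hv1 hv2; ring
  obtain ⟨B2, hB, hC⟩ :
      ∃ B2 : ℝ, (c1 - c0*b0)*v0 + c3*v1 + B2*v2 = 0 ∧
        (c2 - c0*b1)*v0 + (c4 - B2)*v1 + c5*v2 = 0 := by
    by_cases h2 : v2 = 0
    · have h1 : v1 ≠ 0 := by
        intro h1
        apply hN0
        have : v0 = 0 := by rw [h1, h2] at hw; linarith
        rw [this, h1, h2]; ring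
      refine ⟨((c2 - c0*b1)*v0 + c4*v1 + c5*v2)/v1, ?_, ?_⟩
      · rw [h2]
        have key : ((c1 - c0*b0)*v0 + c3*v1) * v1 = 0 := by
          rw [h2] at H2 hw
          linear_combination H2 - c0*v0*hw
        rcases mul_eq_zero.mp key with h | h
        · linarith
        · exact absurd h h1
      · field_simp
        ring
    · refine ⟨-((c1 - c0*b0)*v0 + c3*v1)/v2, ?_, ?_⟩
      · field_simp
        ring
      · have key : ((c2 - c0*b1)*v0 + (c4 - -((c1 - c0*b0)*v0 + c3*v1)/v2)*v1 + c5*v2) * v2 = 0 := by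
          field_simp
          linear_combination H2 - c0*v0*hw
        rcases mul_eq_zero.mp key with h | h
        · linarith
        · exact absurd h h2
  obtain ⟨l3, l7, hd0, hd1, hd2⟩ :=
    vec_decomp b0 b1 b3 b4 b5 v0 v1 v2 d0 d1 d2 hv0 hv1 hv2 hN0 H1
  obtain ⟨l1, l5, hB0, hB1, hB2⟩ :=
    vec_decomp b0 b1 b3 b4 b5 v0 v1 v2 (c1 - c0*b0) c3 B2 hv0 hv1 hv2 hN0 hB
  obtain ⟨l2, l6, hC0, hC1, hC2⟩ :=
    vec_decomp b0 b1 b3 b4 b5 v0 v1 v2 (c2 - c0*b1) (c4 - B2) c5 hv0 hv1 hv2 hN0 hC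
  exact ⟨l1, l2, l3, c0, l5, l6, l7, H0, hd0, hd1, hd2, rfl,
    by linarith, by linarith, hB1, by linarith, hC2⟩

/-- If `M(b)` has rank `3`, then `v(b) ≠ 0`. -/
lemma vbase_ne_zero (b : Fin 7 → ℝ) (hrank : (Mcam b).rank = 3) :
    ¬(b 1 * b 4 - b 0 * b 5 = 0 ∧ b 5 - b 1 * b 3 = 0 ∧ b 0 * b 3 - b 4 = 0) := by
  rintro ⟨h0, h1, h2⟩
  have hb4 : b 4 = b 0 * b 3 := by linarith
  have hb5 : b 5 = b 1 * b 3 := by linarith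
  set r0 : Fin 4 → ℝ := ![1, b 0, b 1, b 2] with hr0
  set r2 : Fin 4 → ℝ := ![0, 0, 0, 1] with hr2
  have hM1 : Mcam b 1 = b 3 • r0 + (b 6 - b 2 * b 3) • r2 := by
    funext j
    fin_cases j <;> simp [Mcam, hr0, hr2, hb4, hb5] <;> ring
  have hM0 : Mcam b 0 = r0 := by
    funext j; fin_cases j <;> simp [Mcam, hr0]
  have hM2 : Mcam b 2 = r2 := by
    funext j; fin_cases j <;> simp [Mcam, hr2]
  have hrange : Set.range (Mcam b) ⊆ ↑(Submodule.span ℝ ({r0, r2} : Set (Fin 4 → ℝ))) := by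
    rintro x ⟨i, rfl⟩
    fin_cases i
    · show Mcam b 0 ∈ _
      exact Submodule.subset_span (by simp [hM0])
    · show Mcam b 1 ∈ _
      rw [hM1]
      exact Submodule.add_mem _
        (Submodule.smul_mem _ _ (Submodule.subset_span (by simp)))
        (Submodule.smul_mem _ _ (Submodule.subset_span (by simp)))
    · show Mcam b 2 ∈ _
      exact Submodule.subset_span (by simp [hM2])
  have hle : Submodule.span ℝ (Set.range (Mcam b)) ≤ Submodule.span ℝ ({r0, r2} : Set (Fin 4 → ℝ)) :=
    Submodule.span_le.mpr hrange
  have h3 : (Mcam b).rank ≤ 2 := by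
    have := Matrix.rank_eq_finrank_span_cols (Mcam b).transpose
    rw [Matrix.rank_transpose, Matrix.col, Matrix.transpose_transpose] at this
    rw [this]
    calc Module.finrank ℝ ↥(Submodule.span ℝ (Set.range (Mcam b)))
        ≤ Module.finrank ℝ ↥(Submodule.span ℝ ({r0, r2} : Set (Fin 4 → ℝ))) :=
          Submodule.finrank_mono hle
      _ ≤ ({r0, r2} : Set (Fin 4 → ℝ)).toFinset.card := finrank_span_le_card _
      _ ≤ 2 := by
          rw [Set.toFinset_insert, Set.toFinset_singleton]
          exact (Finset.card_insert_le _ _).trans (by simp)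
  omega

lemma td_CXX (a : ℝ) (i j : Fin 3) :
    (C a * X i * X j : MvPolynomial (Fin 3) ℝ).totalDegree ≤ 2 := by
  refine (totalDegree_mul _ _).trans ?_
  have h1 : (C a * X i : MvPolynomial (Fin 3) ℝ).totalDegree ≤ 1 := by
    refine (totalDegree_mul _ _).trans ?_
    simp [totalDegree_C, totalDegree_X]
  have h2 : (X j : MvPolynomial (Fin 3) ℝ).totalDegree = 1 := totalDegree_X _
  omega

lemma td_CX2 (a : ℝ) (i : Fin 3) :
    (C a * X i ^ 2 : MvPolynomial (Fin 3) ℝ).totalDegree ≤ 2 := by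
  refine (totalDegree_mul _ _).trans ?_
  have h2 : (X i ^ 2 : MvPolynomial (Fin 3) ℝ).totalDegree = 2 := totalDegree_X_pow _ _
  simp [totalDegree_C, h2]

lemma td_CX (a : ℝ) (i : Fin 3) :
    (C a * X i : MvPolynomial (Fin 3) ℝ).totalDegree ≤ 2 := by
  refine (totalDegree_mul _ _).trans ?_
  simp [totalDegree_C, totalDegree_X]

/-- If `rank M(b) = 3`, the linear span of `q₁, …, q₇` equals the space of all
polynomials of total degree at most 2 vanishing identically on the baseline
(the line through the origin with direction `v(b)`). -/
theorem baseline_polynomials_span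
    (b : Fin 7 → ℝ) (hrank : (Mcam b).rank = 3) :
    (Submodule.span ℝ
        ({q₁ b, q₂ b, q₃ b, q₄ b, q₅ b, q₆ b, q₇ b} : Set (MvPolynomial (Fin 3) ℝ)) :
        Set (MvPolynomial (Fin 3) ℝ)) =
      {q : MvPolynomial (Fin 3) ℝ |
        q.totalDegree ≤ 2 ∧ ∀ s : ℝ, MvPolynomial.eval (s • vbase b) q = 0} := by
  have hNZ := vbase_ne_zero b hrank
  have hN0 : (b 1*b 4 - b 0*b 5)^2 + (b 5 - b 1*b 3)^2 + (b 0*b 3 - b 4)^2 ≠ 0 := by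
    intro hN
    apply hNZ
    refine ⟨?_, ?_, ?_⟩ <;> nlinarith [sq_nonneg (b 1*b 4 - b 0*b 5),
      sq_nonneg (b 5 - b 1*b 3), sq_nonneg (b 0*b 3 - b 4)]
  apply Set.Subset.antisymm
  · -- span ⊆ set
    intro q hq
    induction hq using Submodule.span_induction with
    | mem p hp =>
      simp only [Set.mem_insert_iff, Set.mem_singleton_iff] at hp
      rcases hp with rfl | rfl | rfl | rfl | rfl | rfl | rfl
      · constructor
        · refine (totalDegree_add _ _).trans (max_le ((totalDegree_add _ _).trans
            (max_le ?_ ?_)) ?_)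
          · exact td_CXX _ _ _
          · exact td_CX2 _ _
          · exact td_CXX _ _ _
        · intro s; simp [q₁, vbase]; ring
      · constructor
        · refine (totalDegree_add _ _).trans (max_le ((totalDegree_add _ _).trans
            (max_le ?_ ?_)) ?_)
          · exact td_CXX _ _ _
          · exact td_CXX _ _ _
          · exact td_CX2 _ _
        · intro s; simp [q₂, vbase]; ring
      · constructor
        · refine (totalDegree_add _ _).trans (max_le ((totalDegree_add _ _).trans
            (max_le ?_ ?_)) ?_) <;> exact td_CX _ _
        · intro s; simp [q₃, vbase]; ring
      · constructor
        · refine (totalDegree_add _ _).trans (max_le ((totalDegree_add _ _).trans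
            (max_le ?_ ?_)) ?_)
          · simpa using (totalDegree_X_pow (R := ℝ) (0 : Fin 3) 2).le
          · exact td_CXX _ _ _
          · exact td_CXX _ _ _
        · intro s; simp [q₄, vbase]; ring
      · constructor
        · refine (totalDegree_add _ _).trans (max_le ((totalDegree_add _ _).trans
            (max_le ?_ ?_)) ?_)
          · exact (totalDegree_mul _ _).trans (by simp [totalDegree_X])
          · exact td_CX2 _ _
          · exact td_CXX _ _ _
        · intro s; simp [q₅, vbase]; ring
      · constructor
        · refine (totalDegree_add _ _).trans (max_le ((totalDegree_add _ _).trans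
            (max_le ?_ ?_)) ?_)
          · exact (totalDegree_mul _ _).trans (by simp [totalDegree_X])
          · exact td_CXX _ _ _
          · exact td_CX2 _ _
        · intro s; simp [q₆, vbase]; ring
      · constructor
        · refine (totalDegree_add _ _).trans (max_le ((totalDegree_add _ _).trans
            (max_le ?_ ?_)) ?_)
          · simp [totalDegree_X]
          · exact td_CX _ _
          · exact td_CX _ _
        · intro s; simp [q₇, vbase]; ring
    | zero => exact ⟨by simp, by simp⟩
    | add x y _ _ hx hy =>
      exact ⟨(totalDegree_add _ _).trans (max_le hx.1 hy.1),
        fun s => by simp [hx.2 s, hy.2 s]⟩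
    | smul c x _ hx =>
      exact ⟨(totalDegree_smul_le _ _).trans hx.1, fun s => by simp [hx.2 s]⟩
  · -- set ⊆ span
    rintro q ⟨hdeg, heval⟩
    obtain ⟨e, d0, d1, d2, c0, c1, c2, c3, c4, c5, hq⟩ :
        ∃ e d0 d1 d2 c0 c1 c2 c3 c4 c5 : ℝ,
          q = C e + C d0 * X 0 ^ 1 * X 1 ^ 0 * X 2 ^ 0
            + C d1 * X 0 ^ 0 * X 1 ^ 1 * X 2 ^ 0
            + C d2 * X 0 ^ 0 * X 1 ^ 0 * X 2 ^ 1
            + C c0 * X 0 ^ 2 * X 1 ^ 0 * X 2 ^ 0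
            + C c1 * X 0 ^ 1 * X 1 ^ 1 * X 2 ^ 0
            + C c2 * X 0 ^ 1 * X 1 ^ 0 * X 2 ^ 1
            + C c3 * X 0 ^ 0 * X 1 ^ 2 * X 2 ^ 0
            + C c4 * X 0 ^ 0 * X 1 ^ 1 * X 2 ^ 1
            + C c5 * X 0 ^ 0 * X 1 ^ 0 * X 2 ^ 2 :=
      ⟨_, _, _, _, _, _, _, _, _, _, extract3 q hdeg⟩
    have hE : ∀ s : ℝ,
        e + (d0*(b 1*b 4 - b 0*b 5) + d1*(b 5 - b 1*b 3) + d2*(b 0*b 3 - b 4))*s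
          + (c0*(b 1*b 4 - b 0*b 5)^2 + c1*(b 1*b 4 - b 0*b 5)*(b 5 - b 1*b 3)
            + c2*(b 1*b 4 - b 0*b 5)*(b 0*b 3 - b 4) + c3*(b 5 - b 1*b 3)^2
            + c4*(b 5 - b 1*b 3)*(b 0*b 3 - b 4) + c5*(b 0*b 3 - b 4)^2)*s^2 = 0 := by
      intro s
      have h := heval s
      rw [hq] at h
      simp [vbase] at h
      linear_combination h
    have H0 : e = 0 := by linear_combination hE 0
    have H1 : d0*(b 1*b 4 - b 0*b 5) + d1*(b 5 - b 1*b 3) + d2*(b 0*b 3 - b 4) = 0 := by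
      linear_combination (hE 1 - hE (-1)) / 2
    have H2 : c0*(b 1*b 4 - b 0*b 5)^2 + c1*(b 1*b 4 - b 0*b 5)*(b 5 - b 1*b 3)
        + c2*(b 1*b 4 - b 0*b 5)*(b 0*b 3 - b 4) + c3*(b 5 - b 1*b 3)^2
        + c4*(b 5 - b 1*b 3)*(b 0*b 3 - b 4) + c5*(b 0*b 3 - b 4)^2 = 0 := by
      linear_combination (hE 1 + hE (-1)) / 2 - hE 0
    obtain ⟨l1, l2, l3, l4, l5, l6, l7, he, hd0, hd1, hd2, hc0, hc1, hc2, hc3, hc4, hc5⟩ :=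
      real_decomp (b 0) (b 1) (b 3) (b 4) (b 5) _ _ _ e d0 d1 d2 c0 c1 c2 c3 c4 c5
        rfl rfl rfl hN0 H0 H1 H2
    have hqq : q = C l1 * q₁ b + C l2 * q₂ b + C l3 * q₃ b + C l4 * q₄ b
        + C l5 * q₅ b + C l6 * q₆ b + C l7 * q₇ b := by
      have hCe : (C e : MvPolynomial (Fin 3) ℝ) = 0 := by rw [he]; simp
      have hCd0 : (C d0 : MvPolynomial (Fin 3) ℝ) = C l3 * C (b 3) + C l7 := by
        rw [hd0]; push_cast [map_add, map_mul]; ring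
      have hCd1 : (C d1 : MvPolynomial (Fin 3) ℝ) = C l3 * C (b 4) + C l7 * C (b 0) := by
        rw [hd1]; push_cast [map_add, map_mul]; ring
      have hCd2 : (C d2 : MvPolynomial (Fin 3) ℝ) = C l3 * C (b 5) + C l7 * C (b 1) := by
        rw [hd2]; push_cast [map_add, map_mul]; ring
      have hCc0 : (C c0 : MvPolynomial (Fin 3) ℝ) = C l4 := by rw [hc0]
      have hCc1 : (C c1 : MvPolynomial (Fin 3) ℝ)
          = C l4 * C (b 0) + C l1 * C (b 3) + C l5 := by
        rw [hc1]; push_cast [map_add, map_mul]; ring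
      have hCc2 : (C c2 : MvPolynomial (Fin 3) ℝ)
          = C l4 * C (b 1) + C l2 * C (b 3) + C l6 := by
        rw [hc2]; push_cast [map_add, map_mul]; ring
      have hCc3 : (C c3 : MvPolynomial (Fin 3) ℝ) = C l1 * C (b 4) + C l5 * C (b 0) := by
        rw [hc3]; push_cast [map_add, map_mul]; ring
      have hCc4 : (C c4 : MvPolynomial (Fin 3) ℝ)
          = C l1 * C (b 5) + C l5 * C (b 1) + C l2 * C (b 4) + C l6 * C (b 0) := by
        rw [hc4]; push_cast [map_add, map_mul]; ring
      have hCc5 : (C c5 : MvPolynomial (Fin 3) ℝ) = C l2 * C (b 5) + C l6 * C (b 1) := by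
        rw [hc5]; push_cast [map_add, map_mul]; ring
      rw [hq]
      simp only [q₁, q₂, q₃, q₄, q₅, q₆, q₇]
      linear_combination (hCe : (C e : MvPolynomial (Fin 3) ℝ) = 0)
        + hCd0 * X 0 + hCd1 * X 1 + hCd2 * X 2 + hCc0 * (X 0 ^ 2)
        + hCc1 * (X 0 * X 1) + hCc2 * (X 0 * X 2) + hCc3 * (X 1 ^ 2)
        + hCc4 * (X 1 * X 2) + hCc5 * (X 2 ^ 2)
    rw [hqq]
    have mem : ∀ p ∈ ({q₁ b, q₂ b, q₃ b, q₄ b, q₅ b, q₆ b, q₇ b} :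
        Set (MvPolynomial (Fin 3) ℝ)), ∀ c : ℝ, C c * p ∈ Submodule.span ℝ
        ({q₁ b, q₂ b, q₃ b, q₄ b, q₅ b, q₆ b, q₇ b} : Set (MvPolynomial (Fin 3) ℝ)) := by
      intro p hp c
      rw [← smul_eq_C_mul]
      exact Submodule.smul_mem _ _ (Submodule.subset_span hp)
    refine Submodule.add_mem _ (Submodule.add_mem _ (Submodule.add_mem _ (Submodule.add_mem _
      (Submodule.add_mem _ (Submodule.add_mem _ ?_ ?_) ?_) ?_) ?_) ?_) ?_ <;>
      apply mem <;> simp
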